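/- Assume p(X,Y) is fully supported and p(Y) is the uniform distribution on Y. Let κ be any solution to the Intertwining Information Bottleneck problem with parameter λ = I(X;Y). Then a pair (σ,τ) of bijections of X and Y is an equivariance of p(Y|X) if and only if κ∘(σ⊗τ) = κ, where σ⊗τ denotes the deterministic channel on X×Y sending (x,y) to (σ(x),τ(y)). -/

import Mathlib

noncomputable section

/-- `p` is a probability distribution on the finite set `X × Y`. -/
def IsJointDist {X Y : Type} [Fintype X] [Fintype Y] (p : X → Y → ℝ) : Prop :=
  (∀ x y, 0 ≤ p x y) ∧ (∑ x, ∑ y, p x y) = 1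

/-- Marginal distribution `p(X)`. -/
def margX {X Y : Type} [Fintype Y] (p : X → Y → ℝ) (x : X) : ℝ := ∑ y, p x y

/-- Marginal distribution `p(Y)`. -/
def margY {X Y : Type} [Fintype X] (p : X → Y → ℝ) (y : Y) : ℝ := ∑ x, p x y

/-- Mutual information `I(X;Y) = D(p(X,Y) ‖ p(X)p(Y))`. -/
def miXY {X Y : Type} [Fintype X] [Fintype Y] (p : X → Y → ℝ) : ℝ :=
  ∑ x, ∑ y, p x y * Real.log (p x y / (margX p x * margY p y))

/-- A channel from `A` to the countable bottleneck space `T := ℕ`. -/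
def IsChannelNat {A : Type} (κ : A → ℕ → ℝ) : Prop :=
  (∀ a t, 0 ≤ κ a t) ∧ ∀ a, (∑' t, κ a t) = 1

/-- Pushforward of the distribution `w` on `A` through the channel `κ`. -/
def pushNat {A : Type} [Fintype A] (w : A → ℝ) (κ : A → ℕ → ℝ) (t : ℕ) : ℝ :=
  ∑ a, w a * κ a t

/-- Kullback–Leibler divergence between distributions on `ℕ`. -/
def klNat (u v : ℕ → ℝ) : ℝ := ∑' t, u t * Real.log (u t / v t)

/-- Mutual information between the input (distributed as `w`) and the output of
the channel `κ`, computed from the joint distribution `w(a) κ(t|a)`. -/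
def miNat {A : Type} [Fintype A] (w : A → ℝ) (κ : A → ℕ → ℝ) : ℝ :=
  ∑ a, ∑' t, w a * κ a t * Real.log (κ a t / pushNat w κ t)

/-- The joint distribution `p(X,Y)` as a weight on `X × Y`. -/
def jointW {X Y : Type} (p : X → Y → ℝ) : X × Y → ℝ := fun a => p a.1 a.2

/-- The product of the marginals `p(X)p(Y)` as a weight on `X × Y`. -/
def splitW {X Y : Type} [Fintype X] [Fintype Y] (p : X → Y → ℝ) : X × Y → ℝ :=
  fun a => margX p a.1 * margY p a.2

/-- `κ` solves the Intertwining Information Bottleneck problem with parameter `lam`: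
it is a channel satisfying the constraint `D(κ(p(X,Y)) ‖ κ(p(X)p(Y))) = lam` and it
minimises `I_κ(X,Y;T)` among all channels satisfying this constraint. -/
def SolvesIIB {X Y : Type} [Fintype X] [Fintype Y] (p : X → Y → ℝ)
    (κ : X × Y → ℕ → ℝ) (lam : ℝ) : Prop :=
  IsChannelNat κ ∧
  klNat (pushNat (jointW p) κ) (pushNat (splitW p) κ) = lam ∧
  ∀ κ' : X × Y → ℕ → ℝ, IsChannelNat κ' →
    klNat (pushNat (jointW p) κ') (pushNat (splitW p) κ') = lam →
    miNat (jointW p) κ ≤ miNat (jointW p) κ'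

/-- The ratio `p(x,y)/(p(x)p(y))` whose level sets define the equivalence relation `∼`. -/
def ratio {X Y : Type} [Fintype X] [Fintype Y] (p : X → Y → ℝ) (a : X × Y) : ℝ :=
  p a.1 a.2 / (margX p a.1 * margY p a.2)

/-- A channel `γ` is congruent if distinct inputs have disjoint output supports. -/
def IsCongruentNat {A : Type} (γ : A → ℕ → ℝ) : Prop :=
  ∀ a a', a ≠ a' → Disjoint (Function.support (γ a)) (Function.support (γ a'))


open Real

lemma summable_of_tsum_eq_one {k : ℕ → ℝ} (h : ∑' t, k t = 1) : Summable k := by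
  by_contra hs
  rw [tsum_eq_zero_of_not_summable hs] at h
  norm_num at h

lemma klterm_lb {x y : ℝ} (hx : 0 ≤ x) (hy : 0 ≤ y) (hxy : y = 0 → x = 0) :
    x - y ≤ x * Real.log (x / y) := by
  rcases eq_or_lt_of_le hx with h0 | hx0
  · rw [← h0]; simp; linarith
  · have hy0 : 0 < y := by
      rcases eq_or_lt_of_le hy with h | h
      · exact absurd (hxy h.symm) (ne_of_gt hx0)
      · exact h
    have hlog : Real.log (y / x) ≤ y / x - 1 := Real.log_le_sub_one_of_pos (div_pos hy0 hx0)
    have hinv : Real.log (x / y) = -Real.log (y / x) := by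
      rw [← Real.log_inv, inv_div]
    rw [hinv]
    have h2 : 1 - y / x ≤ -Real.log (y / x) := by linarith
    calc x - y = x * (1 - y / x) := by field_simp
    _ ≤ x * (-Real.log (y / x)) := mul_le_mul_of_nonneg_left h2 hx0.le

lemma klterm_ub {x y C : ℝ} (hx : 0 ≤ x) (hy : 0 ≤ y) (hub : x ≤ C * y) :
    x * Real.log (x / y) ≤ x * Real.log C := by
  rcases eq_or_lt_of_le hx with h0 | hx0
  · rw [← h0]; simp
  · have hy0 : 0 < y := by
      rcases eq_or_lt_of_le hy with h | h
      · rw [← h, mul_zero] at hub; linarith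
      · exact h
    have hC : x / y ≤ C := (div_le_iff₀ hy0).2 (by linarith [hub])
    exact mul_le_mul_of_nonneg_left (Real.log_le_log (div_pos hx0 hy0) hC) hx0.le

lemma summable_klterm {u v : ℕ → ℝ} (hu : ∀ t, 0 ≤ u t) (hv : ∀ t, 0 ≤ v t)
    (hsu : Summable u) (hsv : Summable v) {C : ℝ} (hub : ∀ t, u t ≤ C * v t) :
    Summable (fun t => u t * Real.log (u t / v t)) := by
  have key : ∀ t, u t - v t ≤ u t * Real.log (u t / v t) := fun t =>
    klterm_lb (hu t) (hv t) (fun h => le_antisymm (by have := hub t; rw [h, mul_zero] at this; exact this) (hu t))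
  have ub : ∀ t, u t * Real.log (u t / v t) ≤ u t * Real.log C := fun t =>
    klterm_ub (hu t) (hv t) (hub t)
  have h1 : Summable (fun t => u t * Real.log (u t / v t) - (u t - v t)) := by
    apply Summable.of_nonneg_of_le (fun t => by linarith [key t])
      (fun t => ?_) (((hsu.mul_right (Real.log C)).sub hsu).add hsv)
    show u t * Real.log (u t / v t) - (u t - v t) ≤ u t * Real.log C - u t + v t
    linarith [ub t]
  have := h1.add (hsu.sub hsv)
  simpa using this

open Real

lemma logsum {ι : Type} [Fintype ι] (u v : ι → ℝ)
    (hu : ∀ a, 0 ≤ u a) (hv : ∀ a, 0 ≤ v a)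
    (hvz : ∀ a, v a = 0 → u a = 0) (huz : ∀ a, u a = 0 → v a = 0) :
    (∑ a, u a) * Real.log ((∑ a, u a) / (∑ a, v a)) ≤ ∑ a, u a * Real.log (u a / v a) ∧
    ((∑ a, u a * Real.log (u a / v a)) ≤ (∑ a, u a) * Real.log ((∑ a, u a) / (∑ a, v a)) →
      ∀ a, 0 < u a → u a * (∑ b, v b) = v a * (∑ b, u b)) := by
  set U := ∑ a, u a with hU
  set V := ∑ a, v a with hV
  rcases eq_or_lt_of_le (Finset.sum_nonneg (fun a _ => hu a)) with hU0 | hUpos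
  · -- U = 0
    have hu0 : ∀ a, u a = 0 := fun a =>
      (Finset.sum_eq_zero_iff_of_nonneg (fun a _ => hu a)).1 hU0.symm a (Finset.mem_univ a)
    constructor
    · have h1 : U = 0 := hU0.symm
      have h2 : (∑ a, u a * Real.log (u a / v a)) = 0 :=
        Finset.sum_eq_zero (fun a _ => by rw [hu0 a, zero_mul])
      rw [h1, h2, zero_mul]
    · intro _ a ha
      exact absurd (hu0 a) (ne_of_gt ha)
  · -- 0 < U
    have hex : ∃ a, 0 < u a := by
      by_contra h
      push_neg at h
      have : U = 0 := le_antisymm (hU ▸ Finset.sum_nonpos (fun a _ => h a)) hUpos.le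
      exact absurd this (ne_of_gt hUpos)
    obtain ⟨a₀, ha₀⟩ := hex
    have hva₀ : 0 < v a₀ := by
      rcases eq_or_lt_of_le (hv a₀) with h | h
      · exact absurd (hvz a₀ h.symm) (ne_of_gt ha₀)
      · exact h
    have hVpos : 0 < V := lt_of_lt_of_le hva₀
      (Finset.single_le_sum (fun a _ => hv a) (Finset.mem_univ a₀))
    set E : ι → ℝ := fun a =>
      u a * Real.log (u a / v a) - u a * Real.log (U / V) - (u a - v a * (U / V)) with hE
    have hkey : ∀ a, 0 ≤ E a ∧ (E a ≤ 0 → 0 < u a → u a * V = v a * U) := by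
      intro a
      rcases eq_or_lt_of_le (hu a) with h0 | hpos
      · constructor
        · have hE0 : E a = v a * (U / V) := by
            simp only [hE, ← h0]; ring
          rw [hE0]; exact mul_nonneg (hv a) (div_nonneg hUpos.le hVpos.le)
        · intro _ hc; rw [← h0] at hc; exact absurd hc (lt_irrefl 0)
      · have hvapos : 0 < v a := by
          rcases eq_or_lt_of_le (hv a) with h | h
          · exact absurd (hvz a h.symm) (ne_of_gt hpos)
          · exact h
        set x : ℝ := (v a * U) / (u a * V) with hx
        have hxpos : 0 < x := div_pos (mul_pos hvapos hUpos) (mul_pos hpos hVpos)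
        have hEx : E a = u a * (x - 1 - Real.log x) := by
          simp only [hE, hx]
          rw [Real.log_div (ne_of_gt hpos) (ne_of_gt hvapos),
            Real.log_div (ne_of_gt hUpos) (ne_of_gt hVpos),
            Real.log_div (ne_of_gt (mul_pos hvapos hUpos)) (ne_of_gt (mul_pos hpos hVpos)),
            Real.log_mul (ne_of_gt hvapos) (ne_of_gt hUpos),
            Real.log_mul (ne_of_gt hpos) (ne_of_gt hVpos)]
          field_simp
          ring
        constructor
        · rw [hEx]
          have := Real.log_le_sub_one_of_pos hxpos
          have h2 : 0 ≤ x - 1 - Real.log x := by linarith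
          exact mul_nonneg hpos.le h2
        · intro hle _
          rw [hEx] at hle
          by_contra hne
          have hx1 : x ≠ 1 := by
            intro h1
            apply hne
            have : v a * U = u a * V := by
              have := (div_eq_one_iff_eq (ne_of_gt (mul_pos hpos hVpos))).1 (hx ▸ h1)
              exact this
            linarith [this]
          have hlt := Real.log_lt_sub_one_of_pos hxpos hx1
          have : 0 < u a * (x - 1 - Real.log x) := mul_pos hpos (by linarith)
          linarith
    have hEsum : ∑ a, E a = (∑ a, u a * Real.log (u a / v a)) - U * Real.log (U / V) := by
      simp only [hE]
      rw [Finset.sum_sub_distrib, Finset.sum_sub_distrib, ← Finset.sum_mul,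
        Finset.sum_sub_distrib, ← Finset.sum_mul, ← hU, ← hV]
      have : V * (U / V) = U := by field_simp
      rw [this]
      ring
    have hEnn : 0 ≤ ∑ a, E a := Finset.sum_nonneg (fun a _ => (hkey a).1)
    constructor
    · linarith [hEsum, hEnn]
    · intro hle a hua
      have hEzero : ∑ a, E a ≤ 0 := by linarith [hEsum]
      have : ∀ b ∈ Finset.univ, E b = 0 :=
        (Finset.sum_eq_zero_iff_of_nonneg (fun b _ => (hkey b).1)).1 (le_antisymm hEzero hEnn)
      exact (hkey a).2 (le_of_eq (this a (Finset.mem_univ a))) hua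

section Purity

variable {A : Type} [Fintype A]

lemma pushNat_nonneg (w : A → ℝ) (κ : A → ℕ → ℝ) (hw : ∀ a, 0 ≤ w a)
    (hκ0 : ∀ a t, 0 ≤ κ a t) (t : ℕ) : 0 ≤ pushNat w κ t :=
  Finset.sum_nonneg (fun a _ => mul_nonneg (hw a) (hκ0 a t))

lemma pushNat_summable (w : A → ℝ) (κ : A → ℕ → ℝ) (hκ1 : ∀ a, ∑' t, κ a t = 1) :
    Summable (pushNat w κ) := by
  have : Summable (fun t => ∑ a, w a * κ a t) :=
    summable_sum (fun a _ => (summable_of_tsum_eq_one (hκ1 a)).mul_left (w a))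
  exact this

lemma single_le_pushNat (w : A → ℝ) (κ : A → ℕ → ℝ) (hw : ∀ a, 0 ≤ w a)
    (hκ0 : ∀ a t, 0 ≤ κ a t) (a : A) (t : ℕ) : w a * κ a t ≤ pushNat w κ t :=
  Finset.single_le_sum (fun b _ => mul_nonneg (hw b) (hκ0 b t)) (Finset.mem_univ a)

lemma purity (f q : A → ℝ) (hf : ∀ a, 0 < f a) (hq : ∀ a, 0 < q a)
    (κ : A → ℕ → ℝ) (hκ0 : ∀ a t, 0 ≤ κ a t) (hκ1 : ∀ a, ∑' t, κ a t = 1)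
    (hcon : klNat (pushNat f κ) (pushNat q κ) = ∑ a, f a * Real.log (f a / q a)) :
    ∀ t a a', κ a t ≠ 0 → κ a' t ≠ 0 → f a * q a' = f a' * q a := by
  have hrow : ∀ a, Summable (κ a) := fun a => summable_of_tsum_eq_one (hκ1 a)
  have hP0 : ∀ t, 0 ≤ pushNat f κ t := pushNat_nonneg f κ (fun a => (hf a).le) hκ0
  have hQ0 : ∀ t, 0 ≤ pushNat q κ t := pushNat_nonneg q κ (fun a => (hq a).le) hκ0
  have hPsum : Summable (pushNat f κ) := pushNat_summable f κ hκ1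
  have hQsum : Summable (pushNat q κ) := pushNat_summable q κ hκ1
  set C : ℝ := ∑ b, f b / q b with hCdef
  have hC : ∀ a, f a ≤ C * q a := by
    intro a
    have h1 : f a / q a ≤ C :=
      Finset.single_le_sum (fun b _ => div_nonneg (hf b).le (hq b).le) (Finset.mem_univ a)
    calc f a = (f a / q a) * q a := (div_mul_cancel₀ _ (hq a).ne').symm
    _ ≤ C * q a := mul_le_mul_of_nonneg_right h1 (hq a).le
  have hPQ : ∀ t, pushNat f κ t ≤ C * pushNat q κ t := by
    intro t
    show (∑ a, f a * κ a t) ≤ C * ∑ a, q a * κ a t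
    rw [Finset.mul_sum]
    apply Finset.sum_le_sum
    intro a _
    calc f a * κ a t ≤ (C * q a) * κ a t := mul_le_mul_of_nonneg_right (hC a) (hκ0 a t)
    _ = C * (q a * κ a t) := by ring
  -- g
  set g : ℕ → ℝ := fun t => ∑ a, f a * κ a t * Real.log (f a / q a) with hgdef
  have hgsum : Summable g := by
    apply summable_sum
    intro a _
    exact ((hrow a).mul_left (f a)).mul_right (Real.log (f a / q a))
  have hgtsum : ∑' t, g t = ∑ a, f a * Real.log (f a / q a) := by
    rw [hgdef]
    rw [Summable.tsum_finsetSum (fun a _ => ((hrow a).mul_left (f a)).mul_right (Real.log (f a / q a)))]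
    apply Finset.sum_congr rfl
    intro a _
    have : ∀ t, f a * κ a t * Real.log (f a / q a)
        = (f a * Real.log (f a / q a)) * κ a t := fun t => by ring
    rw [tsum_congr this, tsum_mul_left, hκ1 a, mul_one]
  -- h
  have hhsum : Summable (fun t => pushNat f κ t * Real.log (pushNat f κ t / pushNat q κ t)) :=
    summable_klterm hP0 hQ0 hPsum hQsum hPQ
  have hhtsum : ∑' t, pushNat f κ t * Real.log (pushNat f κ t / pushNat q κ t)
      = ∑ a, f a * Real.log (f a / q a) := hcon
  -- pointwise rewrite of g
  have hgeq : ∀ t, g t = ∑ a, (f a * κ a t) * Real.log ((f a * κ a t) / (q a * κ a t)) := by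
    intro t
    apply Finset.sum_congr rfl
    intro a _
    rcases eq_or_ne (κ a t) 0 with h | h
    · simp [h]
    · rw [mul_div_mul_right _ _ h]
  have hlogsum := fun t => logsum (fun a => f a * κ a t) (fun a => q a * κ a t)
    (fun a => mul_nonneg (hf a).le (hκ0 a t)) (fun a => mul_nonneg (hq a).le (hκ0 a t))
    (fun a h => by
      rcases mul_eq_zero.1 h with h' | h'
      · exact absurd h' (hq a).ne'
      · simp [h'])
    (fun a h => by
      rcases mul_eq_zero.1 h with h' | h'
      · exact absurd h' (hf a).ne'
      · simp [h'])
  have hgap0 : ∀ t, 0 ≤ g t - pushNat f κ t * Real.log (pushNat f κ t / pushNat q κ t) := by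
    intro t
    have h1 := (hlogsum t).1
    rw [← hgeq t] at h1
    have hPt : (∑ a, f a * κ a t) = pushNat f κ t := rfl
    have hQt : (∑ a, q a * κ a t) = pushNat q κ t := rfl
    rw [hPt, hQt] at h1
    linarith
  have hgapsum : Summable (fun t => g t
      - pushNat f κ t * Real.log (pushNat f κ t / pushNat q κ t)) := hgsum.sub hhsum
  have hgaptsum : ∑' t, (g t - pushNat f κ t * Real.log (pushNat f κ t / pushNat q κ t)) = 0 := by
    rw [Summable.tsum_sub hgsum hhsum, hgtsum, hhtsum, sub_self]
  have hgapzero : ∀ t, g t - pushNat f κ t * Real.log (pushNat f κ t / pushNat q κ t) = 0 := by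
    intro t
    have hle : g t - pushNat f κ t * Real.log (pushNat f κ t / pushNat q κ t)
        ≤ ∑' s, (g s - pushNat f κ s * Real.log (pushNat f κ s / pushNat q κ s)) :=
      Summable.le_tsum hgapsum t (fun j _ => hgap0 j)
    rw [hgaptsum] at hle
    exact le_antisymm hle (hgap0 t)
  intro t a a' ha ha'
  have hQt : 0 < pushNat q κ t :=
    lt_of_lt_of_le (mul_pos (hq a) ((hκ0 a t).lt_of_ne' ha))
      (single_le_pushNat q κ (fun b => (hq b).le) hκ0 a t)
  have heqc := (hlogsum t).2
  have hgt : (∑ b, (f b * κ b t) * Real.log ((f b * κ b t) / (q b * κ b t)))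
      ≤ (∑ b, f b * κ b t) * Real.log ((∑ b, f b * κ b t) / (∑ b, q b * κ b t)) := by
    have h0 := hgapzero t
    rw [hgeq t] at h0
    have hPt : (∑ b, f b * κ b t) = pushNat f κ t := rfl
    have hQt' : (∑ b, q b * κ b t) = pushNat q κ t := rfl
    rw [hPt, hQt']
    linarith [h0]
  have heq := heqc hgt
  have e1 := heq a (mul_pos (hf a) ((hκ0 a t).lt_of_ne' ha))
  have e2 := heq a' (mul_pos (hf a') ((hκ0 a' t).lt_of_ne' ha'))
  -- e : f b * κ b t * (∑ q κ) = q b * κ b t * (∑ f κ)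
  have hPt : (∑ b, f b * κ b t) = pushNat f κ t := rfl
  have hQt' : (∑ b, q b * κ b t) = pushNat q κ t := rfl
  rw [hPt, hQt'] at e1 e2
  have e1' : f a * pushNat q κ t = q a * pushNat f κ t := by
    have := mul_right_cancel₀ ha (by linear_combination e1 :
      (f a * pushNat q κ t) * κ a t = (q a * pushNat f κ t) * κ a t)
    exact this
  have e2' : f a' * pushNat q κ t = q a' * pushNat f κ t := by
    have := mul_right_cancel₀ ha' (by linear_combination e2 :
      (f a' * pushNat q κ t) * κ a' t = (q a' * pushNat f κ t) * κ a' t)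
    exact this
  have key : (f a * q a') * pushNat q κ t = (f a' * q a) * pushNat q κ t := by
    linear_combination q a' * e1' - q a * e2'
  exact mul_right_cancel₀ hQt.ne' key

end Purity

section Constancy

variable {A : Type} [Fintype A]

set_option maxHeartbeats 1000000 in
lemma constancy (f q : A → ℝ) (hf : ∀ a, 0 < f a) (hq : ∀ a, 0 < q a)
    (κ : A → ℕ → ℝ) (hκ0 : ∀ a t, 0 ≤ κ a t) (hκ1 : ∀ a, ∑' t, κ a t = 1)
    (lam : ℝ) (hcon : klNat (pushNat f κ) (pushNat q κ) = lam)
    (hmin : ∀ κ' : A → ℕ → ℝ, IsChannelNat κ' →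
      klNat (pushNat f κ') (pushNat q κ') = lam → miNat f κ ≤ miNat f κ')
    (a₀ a₁ : A) (hr : f a₀ * q a₁ = f a₁ * q a₀) (t₀ : ℕ) :
    κ a₀ t₀ = κ a₁ t₀ := by
  classical
  rcases eq_or_ne a₀ a₁ with rfl | hne
  · rfl
  by_contra hnet
  have hrow : ∀ a, Summable (κ a) := fun a => summable_of_tsum_eq_one (hκ1 a)
  set W : ℝ := f a₀ + f a₁ with hWdef
  have hW : 0 < W := add_pos (hf a₀) (hf a₁)
  set m : ℕ → ℝ := fun t => (f a₀ * κ a₀ t + f a₁ * κ a₁ t) / W with hmdef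
  have hm0 : ∀ t, 0 ≤ m t := fun t => div_nonneg
    (add_nonneg (mul_nonneg (hf a₀).le (hκ0 a₀ t)) (mul_nonneg (hf a₁).le (hκ0 a₁ t))) hW.le
  have hmsum : Summable m :=
    (((hrow a₀).mul_left (f a₀)).add ((hrow a₁).mul_left (f a₁))).div_const W
  have hmtsum : ∑' t, m t = 1 := by
    rw [hmdef]
    rw [tsum_div_const, Summable.tsum_add ((hrow a₀).mul_left (f a₀)) ((hrow a₁).mul_left (f a₁)),
      tsum_mul_left, tsum_mul_left, hκ1, hκ1, mul_one, mul_one]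
    field_simp
    exact hWdef.symm
  set κ' : A → ℕ → ℝ := fun a t => if a = a₀ ∨ a = a₁ then m t else κ a t with hκ'def
  have hch' : IsChannelNat κ' := by
    constructor
    · intro a t
      by_cases h : a = a₀ ∨ a = a₁ <;> simp only [hκ'def, h, if_true, if_false]
      · exact hm0 t
      · exact hκ0 a t
    · intro a
      by_cases h : a = a₀ ∨ a = a₁ <;> simp only [hκ'def, h, if_true, if_false]
      · exact hmtsum
      · exact hκ1 a
  have hκ'm : ∀ t, κ' a₀ t = m t := fun t => by simp [hκ'def]
  have hκ'm1 : ∀ t, κ' a₁ t = m t := fun t => by simp [hκ'def]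
  have hκ'other : ∀ a, a ≠ a₀ → a ≠ a₁ → κ' a = κ a := by
    intro a h0 h1; funext t; simp [hκ'def, h0, h1]
  -- pushforwards are preserved
  have hpush : ∀ ω : A → ℝ, ω a₀ * f a₁ = ω a₁ * f a₀ → pushNat ω κ' = pushNat ω κ := by
    intro ω hw
    funext t
    show (∑ a, ω a * κ' a t) = ∑ a, ω a * κ a t
    rw [← sub_eq_zero, ← Finset.sum_sub_distrib]
    have hz : ∀ a ∈ Finset.univ, a ∉ ({a₀, a₁} : Finset A) →
        ω a * κ' a t - ω a * κ a t = 0 := by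
      intro a _ ha
      simp only [Finset.mem_insert, Finset.mem_singleton, not_or] at ha
      rw [hκ'other a ha.1 ha.2, sub_self]
    rw [← Finset.sum_subset (Finset.subset_univ _) hz,
      Finset.sum_pair hne, hκ'm t, hκ'm1 t]
    have hmt : W * m t = f a₀ * κ a₀ t + f a₁ * κ a₁ t := by
      rw [hmdef]; field_simp
    have expand : (ω a₀ * m t - ω a₀ * κ a₀ t + (ω a₁ * m t - ω a₁ * κ a₁ t)) * W
        = (ω a₀ + ω a₁) * (W * m t) - W * (ω a₀ * κ a₀ t + ω a₁ * κ a₁ t) := by ring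
    have : (ω a₀ * m t - ω a₀ * κ a₀ t + (ω a₁ * m t - ω a₁ * κ a₁ t)) * W = 0 := by
      rw [expand, hmt, hWdef]
      linear_combination (κ a₁ t - κ a₀ t) * hw
    exact (mul_eq_zero.1 this).resolve_right hW.ne'
  have hpushf : pushNat f κ' = pushNat f κ := hpush f (by ring)
  have hpushq : pushNat q κ' = pushNat q κ := hpush q (by linear_combination - hr)
  have hcon' : klNat (pushNat f κ') (pushNat q κ') = lam := by rw [hpushf, hpushq]; exact hcon
  have hle := hmin κ' hch' hcon'
  -- row summability
  have hP0 : ∀ t, 0 ≤ pushNat f κ t := pushNat_nonneg f κ (fun a => (hf a).le) hκ0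
  have hPsum : Summable (pushNat f κ) := pushNat_summable f κ hκ1
  have hPle : ∀ a t, f a * κ a t ≤ pushNat f κ t :=
    fun a t => single_le_pushNat f κ (fun b => (hf b).le) hκ0 a t
  have hrowK : ∀ a, Summable (fun t => κ a t * Real.log (κ a t / pushNat f κ t)) := by
    intro a
    apply summable_klterm (hκ0 a) hP0 (hrow a) hPsum (C := (f a)⁻¹)
    intro t
    have h2 := mul_le_mul_of_nonneg_left (hPle a t) (inv_nonneg.2 (hf a).le)
    rw [← mul_assoc, inv_mul_cancel₀ (hf a).ne', one_mul] at h2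
    exact h2
  have hrowM : Summable (fun t => m t * Real.log (m t / pushNat f κ t)) := by
    apply summable_klterm hm0 hP0 hmsum hPsum (C := 2 / W)
    intro t
    rw [hmdef]
    rw [div_mul_eq_mul_div, div_le_div_iff_of_pos_right hW]
    calc f a₀ * κ a₀ t + f a₁ * κ a₁ t ≤ pushNat f κ t + pushNat f κ t :=
      add_le_add (hPle a₀ t) (hPle a₁ t)
    _ = 2 * pushNat f κ t := by ring
  -- expansion of miNat
  have hmiK : miNat f κ = ∑ a, f a * ∑' t, κ a t * Real.log (κ a t / pushNat f κ t) := by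
    show (∑ a, ∑' t, f a * κ a t * Real.log (κ a t / pushNat f κ t)) = _
    apply Finset.sum_congr rfl
    intro a _
    rw [← tsum_mul_left]
    apply tsum_congr
    intro t
    ring
  have hmiK' : miNat f κ' = ∑ a, f a * ∑' t, κ' a t * Real.log (κ' a t / pushNat f κ t) := by
    show (∑ a, ∑' t, f a * κ' a t * Real.log (κ' a t / pushNat f κ' t)) = _
    rw [hpushf]
    apply Finset.sum_congr rfl
    intro a _
    rw [← tsum_mul_left]
    apply tsum_congr
    intro t
    ring
  -- difference
  have hdiff : miNat f κ - miNat f κ'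
      = f a₀ * ∑' t, κ a₀ t * Real.log (κ a₀ t / pushNat f κ t)
      + f a₁ * ∑' t, κ a₁ t * Real.log (κ a₁ t / pushNat f κ t)
      - W * ∑' t, m t * Real.log (m t / pushNat f κ t) := by
    rw [hmiK, hmiK', ← Finset.sum_sub_distrib]
    have hz : ∀ a ∈ Finset.univ, a ∉ ({a₀, a₁} : Finset A) →
        f a * (∑' t, κ a t * Real.log (κ a t / pushNat f κ t))
        - f a * (∑' t, κ' a t * Real.log (κ' a t / pushNat f κ t)) = 0 := by
      intro a _ ha
      simp only [Finset.mem_insert, Finset.mem_singleton, not_or] at ha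
      rw [hκ'other a ha.1 ha.2, sub_self]
    rw [← Finset.sum_subset (Finset.subset_univ _) hz, Finset.sum_pair hne]
    have e0 : (∑' t, κ' a₀ t * Real.log (κ' a₀ t / pushNat f κ t))
        = ∑' t, m t * Real.log (m t / pushNat f κ t) :=
      tsum_congr (fun t => by rw [hκ'm t])
    have e1 : (∑' t, κ' a₁ t * Real.log (κ' a₁ t / pushNat f κ t))
        = ∑' t, m t * Real.log (m t / pushNat f κ t) :=
      tsum_congr (fun t => by rw [hκ'm1 t])
    rw [e0, e1, hWdef]
    ring
  -- the pointwise gap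
  set D : ℕ → ℝ := fun t => f a₀ * (κ a₀ t * Real.log (κ a₀ t / pushNat f κ t))
      + f a₁ * (κ a₁ t * Real.log (κ a₁ t / pushNat f κ t))
      - W * (m t * Real.log (m t / pushNat f κ t)) with hDdef
  have hDsum : Summable D :=
    (((hrowK a₀).mul_left (f a₀)).add ((hrowK a₁).mul_left (f a₁))).sub (hrowM.mul_left W)
  have hDtsum : ∑' t, D t = miNat f κ - miNat f κ' := by
    rw [hdiff, hDdef]
    rw [Summable.tsum_sub (((hrowK a₀).mul_left (f a₀)).add ((hrowK a₁).mul_left (f a₁)))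
      (hrowM.mul_left W),
      Summable.tsum_add ((hrowK a₀).mul_left (f a₀)) ((hrowK a₁).mul_left (f a₁)),
      tsum_mul_left, tsum_mul_left, tsum_mul_left]
  have hDkey : ∀ t, 0 ≤ D t ∧ (κ a₀ t ≠ κ a₁ t → 0 < D t) := by
    intro t
    rcases eq_or_lt_of_le (hP0 t) with hPt | hPt
    · -- P t = 0, all rows vanish
      have hall : ∀ a, κ a t = 0 := by
        intro a
        have hPt' : (∑ b, f b * κ b t) = 0 := hPt.symm
        have h0 : ∀ b ∈ Finset.univ, f b * κ b t = 0 :=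
          (Finset.sum_eq_zero_iff_of_nonneg
            (fun b _ => mul_nonneg (hf b).le (hκ0 b t))).1 hPt'
        have := h0 a (Finset.mem_univ a)
        exact (mul_eq_zero.1 this).resolve_left (hf a).ne'
      have hmt : m t = 0 := by rw [hmdef]; simp [hall a₀, hall a₁]
      constructor
      · rw [hDdef]
        simp [hall a₀, hall a₁, hmt]
      · intro hc
        exact absurd (by rw [hall a₀, hall a₁]) hc
    · -- 0 < P t
      have hsplit : ∀ x : ℝ, 0 ≤ x → x * Real.log (x / pushNat f κ t)
          = x * Real.log x - x * Real.log (pushNat f κ t) := by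
        intro x hx
        rcases eq_or_lt_of_le hx with h | h
        · rw [← h]; simp
        · rw [Real.log_div h.ne' hPt.ne']; ring
      have hmt : W * m t = f a₀ * κ a₀ t + f a₁ * κ a₁ t := by
        rw [hmdef]; field_simp
      have hDt : D t = f a₀ * (κ a₀ t * Real.log (κ a₀ t))
          + f a₁ * (κ a₁ t * Real.log (κ a₁ t))
          - W * (m t * Real.log (m t)) := by
        rw [hDdef]
        simp only
        rw [hsplit _ (hκ0 a₀ t), hsplit _ (hκ0 a₁ t), hsplit _ (hm0 t)]
        have hz : f a₀ * κ a₀ t + f a₁ * κ a₁ t - W * m t = 0 := by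
          linear_combination -hmt
        linear_combination (-Real.log (pushNat f κ t)) * hz
      set α : ℝ := f a₀ / W with hαdef
      set β : ℝ := f a₁ / W with hβdef
      have hα : 0 < α := div_pos (hf a₀) hW
      have hβ : 0 < β := div_pos (hf a₁) hW
      have hαβ : α + β = 1 := by rw [hαdef, hβdef, hWdef]; field_simp; exact div_self (add_pos (hf a₀) (hf a₁)).ne'
      have hmαβ : m t = α * κ a₀ t + β * κ a₁ t := by
        rw [hmdef, hαdef, hβdef]; field_simp
      have hx0 : κ a₀ t ∈ Set.Ici (0:ℝ) := hκ0 a₀ t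
      have hx1 : κ a₁ t ∈ Set.Ici (0:ℝ) := hκ0 a₁ t
      constructor
      · have hj := Real.convexOn_mul_log.2 hx0 hx1 hα.le hβ.le hαβ
        simp only [smul_eq_mul] at hj
        rw [← hmαβ] at hj
        have hWα : W * α = f a₀ := by rw [hαdef]; field_simp
        have hWβ : W * β = f a₁ := by rw [hβdef]; field_simp
        have hexp : W * (α * (κ a₀ t * Real.log (κ a₀ t)) + β * (κ a₁ t * Real.log (κ a₁ t)))
            = f a₀ * (κ a₀ t * Real.log (κ a₀ t)) + f a₁ * (κ a₁ t * Real.log (κ a₁ t)) := by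
          linear_combination (κ a₀ t * Real.log (κ a₀ t)) * hWα
            + (κ a₁ t * Real.log (κ a₁ t)) * hWβ
        have hfin := mul_le_mul_of_nonneg_left hj hW.le
        rw [hexp] at hfin
        rw [hDt]
        linarith
      · intro hc
        have hj := Real.strictConvexOn_mul_log.2 hx0 hx1 hc hα hβ hαβ
        simp only [smul_eq_mul] at hj
        rw [← hmαβ] at hj
        have hWα : W * α = f a₀ := by rw [hαdef]; field_simp
        have hWβ : W * β = f a₁ := by rw [hβdef]; field_simp
        have hexp : W * (α * (κ a₀ t * Real.log (κ a₀ t)) + β * (κ a₁ t * Real.log (κ a₁ t)))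
            = f a₀ * (κ a₀ t * Real.log (κ a₀ t)) + f a₁ * (κ a₁ t * Real.log (κ a₁ t)) := by
          linear_combination (κ a₀ t * Real.log (κ a₀ t)) * hWα
            + (κ a₁ t * Real.log (κ a₁ t)) * hWβ
        have hfin := mul_lt_mul_of_pos_left hj hW
        rw [hexp] at hfin
        rw [hDt]
        linarith
  have h1 : D t₀ ≤ ∑' t, D t := Summable.le_tsum hDsum t₀ (fun j _ => (hDkey j).1)
  have h2 : 0 < D t₀ := (hDkey t₀).2 hnet
  rw [hDtsum] at h1
  linarith

end Constancy

set_option maxHeartbeats 1000000 in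
/-- Assume `p(X,Y)` is fully supported and `p(Y)` is uniform on `Y`.
Let `κ` solve the Intertwining Information Bottleneck problem with parameter
`λ = I(X;Y)`. Then a pair `(σ,τ)` of bijections of `X` and `Y` is an equivariance of
the conditional channel `p(Y|X)` (i.e. `p(τ y | σ x) = p(y|x)` for all `x,y`, where
`p(y|x) = p(x,y)/p(x)`) if and only if `κ ∘ (σ ⊗ τ) = κ`, where `σ ⊗ τ` is the
deterministic channel `(x,y) ↦ (σ x, τ y)`. -/
theorem iib_characterises_equivariances {X Y : Type} [Fintype X] [Fintype Y]
    (p : X → Y → ℝ) (hp : IsJointDist p)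
    (hfull : ∀ x y, p x y ≠ 0)
    (hunif : ∀ y : Y, margY p y = (Fintype.card Y : ℝ)⁻¹)
    (κ : X × Y → ℕ → ℝ) (hκ : SolvesIIB p κ (miXY p))
    (σ : Equiv.Perm X) (τ : Equiv.Perm Y) :
    (∀ x y, p (σ x) (τ y) / margX p (σ x) = p x y / margX p x) ↔
      (∀ (a : X × Y) (t : ℕ), κ (σ a.1, τ a.2) t = κ a t) := by
  classical
  obtain ⟨⟨hκ0, hκ1⟩, hcon, hmin⟩ := hκ
  have hY : Nonempty Y := by
    by_contra h
    haveI := not_nonempty_iff.mp h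
    have h2 := hp.2
    simp at h2
  have hX : Nonempty X := by
    by_contra h
    haveI := not_nonempty_iff.mp h
    have h2 := hp.2
    simp at h2
  have hppos : ∀ x y, 0 < p x y := fun x y => (hp.1 x y).lt_of_ne (Ne.symm (hfull x y))
  have hmX : ∀ x, 0 < margX p x := fun x =>
    Finset.sum_pos (fun y _ => hppos x y) Finset.univ_nonempty
  have hmY : ∀ y, 0 < margY p y := fun y =>
    Finset.sum_pos (fun x _ => hppos x y) Finset.univ_nonempty
  have hfpos : ∀ a : X × Y, 0 < jointW p a := fun a => hppos a.1 a.2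
  have hqpos : ∀ a : X × Y, 0 < splitW p a := fun a => mul_pos (hmX a.1) (hmY a.2)
  have hmieq : miXY p = ∑ a : X × Y, jointW p a * Real.log (jointW p a / splitW p a) := by
    rw [miXY, Fintype.sum_prod_type]; rfl
  have hpure := purity (jointW p) (splitW p) hfpos hqpos κ hκ0 hκ1 (by rw [hcon, hmieq])
  constructor
  · intro heq a t
    obtain ⟨x, y⟩ := a
    refine constancy (jointW p) (splitW p) hfpos hqpos κ hκ0 hκ1 (miXY p) hcon hmin
      (σ x, τ y) (x, y) ?_ t
    show p (σ x) (τ y) * (margX p x * margY p y) = p x y * (margX p (σ x) * margY p (τ y))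
    have h1 : margY p (τ y) = margY p y := by rw [hunif, hunif]
    have h2 : p (σ x) (τ y) * margX p x = p x y * margX p (σ x) :=
      (div_eq_div_iff (hmX (σ x)).ne' (hmX x).ne').1 (heq x y)
    rw [h1]
    linear_combination margY p y * h2
  · intro hk x y
    have hex : ∃ t, κ (x, y) t ≠ 0 := by
      by_contra h
      push_neg at h
      have h1 := hκ1 (x, y)
      simp [h] at h1
    obtain ⟨t₀, ht₀⟩ := hex
    have h2 : κ (σ x, τ y) t₀ ≠ 0 := by
      rw [show κ (σ x, τ y) t₀ = κ (x, y) t₀ from hk (x, y) t₀]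
      exact ht₀
    have hpij := hpure t₀ (σ x, τ y) (x, y) h2 ht₀
    have hpij' : p (σ x) (τ y) * (margX p x * margY p y)
        = p x y * (margX p (σ x) * margY p (τ y)) := hpij
    have h1 : margY p (τ y) = margY p y := by rw [hunif, hunif]
    rw [div_eq_div_iff (hmX (σ x)).ne' (hmX x).ne']
    have h3 : p (σ x) (τ y) * margX p x * margY p y = p x y * margX p (σ x) * margY p y := by
      rw [h1] at hpij'
      linear_combination hpij'
    exact mul_right_cancel₀ (hmY y).ne' h3
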